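/- Let C(λ) = D(μ^λ - 1) with D > 0, μ > 1. For any λ ≥ 0 and any r with 0 ≤ r/D ≤ 1/log2(μ), the cost increment satisfies C(λ + r/D) - C(λ) ≤ log2(μ) · ((r/D)·C(λ) + r). -/

import Mathlib

lemma two_rpow_le_one_add (x : ℝ) (h0 : 0 ≤ x) (h1 : x ≤ 1) : (2:ℝ) ^ x ≤ 1 + x := by
  have h := convexOn_exp.2 (Set.mem_univ (Real.log 2)) (Set.mem_univ 0)
    h0 (by linarith : (0:ℝ) ≤ 1 - x) (by ring)
  simp only [smul_eq_mul, mul_zero, add_zero, Real.exp_zero] at h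
  have h2 : (2:ℝ) ^ x = Real.exp (x * Real.log 2) := by
    rw [Real.rpow_def_of_pos (by norm_num), mul_comm]
  rw [h2]
  have h3 : Real.exp (Real.log 2) = 2 := Real.exp_log (by norm_num)
  rw [h3] at h
  linarith

/-- Cost increment bound: for `C(λ) = D(μ^λ - 1)`, `D > 0`, `μ > 1`, `λ ≥ 0`,
`0 ≤ r/D ≤ 1/log2 μ`, we have
`C(λ + r/D) - C(λ) ≤ log2 μ · ((r/D)·C(λ) + r)`. -/
theorem stmt_5 (D μ lam r : ℝ) (hD : 0 < D) (hμ : 1 < μ) (hlam : 0 ≤ lam)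
    (hr0 : 0 ≤ r / D) (hr1 : r / D ≤ 1 / Real.logb 2 μ) :
    D * (μ ^ (lam + r / D) - 1) - D * (μ ^ lam - 1) ≤
      Real.logb 2 μ * ((r / D) * (D * (μ ^ lam - 1)) + r) := by
  have hμ0 : 0 < μ := lt_trans one_pos hμ
  set L := Real.logb 2 μ with hL
  have hLpos : 0 < L := Real.logb_pos (by norm_num) hμ
  set s := r / D with hs
  have hx0 : 0 ≤ L * s := mul_nonneg hLpos.le hr0
  have hx1 : L * s ≤ 1 := by
    rw [mul_comm]
    calc s * L ≤ (1 / L) * L := mul_le_mul_of_nonneg_right hr1 hLpos.le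
    _ = 1 := by field_simp
  have hmu : μ = (2:ℝ) ^ L := (Real.rpow_logb (by norm_num) (by norm_num) hμ0).symm
  have hmus : μ ^ s ≤ 1 + L * s := by
    have : μ ^ s = (2:ℝ) ^ (L * s) := by
      rw [hmu, ← Real.rpow_mul (by norm_num : (0:ℝ) ≤ 2)]
    rw [this]
    exact two_rpow_le_one_add _ hx0 hx1
  have hadd : μ ^ (lam + s) = μ ^ lam * μ ^ s := Real.rpow_add hμ0 _ _
  have hpow : 0 < μ ^ lam := Real.rpow_pos_of_pos hμ0 _
  have hsD : s * D = r := by rw [hs]; exact div_mul_cancel₀ r hD.ne'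
  rw [hadd]
  nlinarith [mul_le_mul_of_nonneg_left hmus (mul_nonneg hD.le hpow.le)]
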